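/- There exist constants c > 0, C > 0 and δ₀ ∈ (0, 1) such that for every δ ∈ (0, δ₀) there exists a holomorphic function f on ℂ* satisfying |f(1/δ)|² e^{−δ² − δ^{−2}} ≥ c and ∫_{ℂ*} |f(t)|² e^{−|t|² − |t|^{−2}} (1 + |t|⁻⁴) dA(t) ≤ C·δ^{−1/2}. (This produces, on the component {xy = 1} of the curve C₁ parametrized by t ↦ (t, 1/t), a function of norm O(δ^{−1/2}) in the standard Bargmann-Fock Bergman space of the curve whose normalized pointwise value at the point (1/δ, δ) is bounded below.) -/

import Mathlib

open MeasureTheory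

lemma one_add_sq_le_three_exp {u : ℝ} (hu : 0 ≤ u) : 1 + u ^ 2 ≤ 3 * Real.exp u := by
  have h := Real.add_one_le_exp (u / 3)
  have h3 : Real.exp u = Real.exp (u / 3) ^ 3 := by
    rw [← Real.exp_nat_mul]; congr 1; push_cast; ring
  rw [h3]
  have hpos : (0 : ℝ) ≤ u / 3 + 1 := by linarith
  have hcube : (u / 3 + 1) ^ 3 ≤ Real.exp (u / 3) ^ 3 :=
    pow_le_pow_left₀ hpos h 3
  nlinarith [sq_nonneg u, pow_nonneg hu 3]

lemma pointwise_aux {E F S : ℝ} (hS : 0 ≤ S) (hEF : E + S ≤ 1 + F) :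
    Real.exp E * (1 + S ^ 2) ≤ 3 * Real.exp 1 * Real.exp F := by
  have k := one_add_sq_le_three_exp hS
  calc Real.exp E * (1 + S ^ 2) ≤ Real.exp E * (3 * Real.exp S) :=
        mul_le_mul_of_nonneg_left k (Real.exp_pos _).le
    _ = 3 * Real.exp (E + S) := by rw [Real.exp_add]; ring
    _ ≤ 3 * Real.exp (1 + F) :=
        mul_le_mul_of_nonneg_left (Real.exp_le_exp.mpr hEF) (by norm_num)
    _ = 3 * Real.exp 1 * Real.exp F := by rw [Real.exp_add]; ring

lemma gauss_lintegral (a : ℂ) :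
    ∫⁻ t : ℂ, ENNReal.ofReal (Real.exp (-‖t - a‖ ^ 2)) = ENNReal.ofReal Real.pi := by
  rw [lintegral_sub_right_eq_self (fun t => ENNReal.ofReal (Real.exp (-‖t‖ ^ 2))) a]
  have hi : Integrable (fun t : ℂ => Real.exp (-1 * ‖t‖ ^ 2)) := by
    have h := (GaussianFourier.integrable_cexp_neg_mul_sq_norm_add
      (b := 1) (by norm_num) 0 (0 : ℂ)).norm
    refine h.congr (Filter.Eventually.of_forall fun v => ?_)
    simp [Complex.norm_exp, ← Complex.ofReal_pow]
  have heq : ∫ t : ℂ, Real.exp (-1 * ‖t‖ ^ 2) = Real.pi := by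
    rw [GaussianFourier.integral_rexp_neg_mul_sq_norm one_pos]
    simp [Complex.finrank_real_complex]
  rw [← heq, ofReal_integral_eq_lintegral_ofReal hi
    (Filter.Eventually.of_forall fun x => (Real.exp_pos _).le)]
  simp

/-- Construction, on the component `{xy = 1}` of the curve `C₁` (parametrized by
`t ↦ (t, 1/t)`, with pulled-back standard weight `|t|² + |t|⁻²` and area form
`(1 + |t|⁻⁴)dA`), of holomorphic functions of Bergman norm `O(δ^{-1/2})` whose normalized
value at `t = 1/δ` is bounded below. -/
theorem statement15 :
    ∃ c : ℝ, 0 < c ∧ ∃ C : ℝ, 0 < C ∧ ∃ δ₀ : ℝ, 0 < δ₀ ∧ δ₀ < 1 ∧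
      ∀ δ : ℝ, 0 < δ → δ < δ₀ →
        ∃ f : ℂ → ℂ, (∀ t : ℂ, t ≠ 0 → DifferentiableAt ℂ f t) ∧
          c ≤ ‖f ((δ : ℂ)⁻¹)‖ ^ 2 * Real.exp (-(δ ^ 2 + (δ ^ 2)⁻¹)) ∧
          (∫⁻ t in {(0 : ℂ)}ᶜ,
              ENNReal.ofReal (‖f t‖ ^ 2 * Real.exp (-(‖t‖ ^ 2 + (‖t‖ ^ 2)⁻¹)) *
                (1 + (‖t‖ ^ 4)⁻¹)))
            ≤ ENNReal.ofReal (C / Real.sqrt δ) := by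
  refine ⟨1, one_pos, 3 * Real.pi * Real.exp 1, by positivity, 1/2, by norm_num, by norm_num,
    fun δ hδ hδ₀ => ?_⟩
  have hδ1 : δ < 1 := by linarith
  set r : ℝ := (δ ^ 2 - (δ ^ 2)⁻¹) / 2 with hr
  refine ⟨fun t => (Real.exp r : ℂ) * Complex.exp (t * (δ : ℂ)⁻¹), ?_, ?_, ?_⟩
  · intro t _
    exact (differentiableAt_const _).mul
      (Complex.differentiable_exp.differentiableAt.comp t
        (differentiableAt_id.mul (differentiableAt_const _)))
  · -- pointwise value
    have hδc : ((δ : ℂ)⁻¹ * (δ : ℂ)⁻¹) = (((δ ^ 2)⁻¹ : ℝ) : ℂ) := by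
      push_cast; ring
    have hnorm : ‖(Real.exp r : ℂ) * Complex.exp ((δ : ℂ)⁻¹ * (δ : ℂ)⁻¹)‖
        = Real.exp r * Real.exp ((δ ^ 2)⁻¹) := by
      rw [hδc, norm_mul, Complex.norm_real, Real.norm_eq_abs,
        abs_of_pos (Real.exp_pos _), ← Complex.ofReal_exp, Complex.norm_real, Real.norm_eq_abs,
        abs_of_pos (Real.exp_pos _)]
    rw [hnorm]
    rw [mul_pow, ← Real.exp_nat_mul, ← Real.exp_nat_mul, ← Real.exp_add, ← Real.exp_add]
    rw [show (1 : ℝ) = Real.exp 0 from (Real.exp_zero).symm]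
    apply Real.exp_le_exp.mpr
    rw [hr]
    push_cast
    ring_nf
    norm_num
  · -- integral bound
    set a : ℝ := δ⁻¹ with ha
    have hbound : ∀ t : ℂ, t ∈ ({(0 : ℂ)}ᶜ : Set ℂ) →
        ENNReal.ofReal (‖(Real.exp r : ℂ) * Complex.exp (t * (δ : ℂ)⁻¹)‖ ^ 2 *
          Real.exp (-(‖t‖ ^ 2 + (‖t‖ ^ 2)⁻¹)) * (1 + (‖t‖ ^ 4)⁻¹))
        ≤ ENNReal.ofReal (3 * Real.exp 1 * Real.exp (-‖t - (a : ℂ)‖ ^ 2)) := by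
      intro t ht
      apply ENNReal.ofReal_le_ofReal
      have ht0 : t ≠ 0 := by simpa using ht
      have hS : 0 < ‖t‖ ^ 2 := pow_pos (norm_pos_iff.mpr ht0) 2
      have hnorm : ‖(Real.exp r : ℂ) * Complex.exp (t * (δ : ℂ)⁻¹)‖
          = Real.exp r * Real.exp (t.re * a) := by
        rw [norm_mul, Complex.norm_real, Real.norm_eq_abs,
          abs_of_pos (Real.exp_pos _), Complex.norm_exp]
        congr 2
        simp [Complex.mul_re, ha]
      have hS4 : (‖t‖ ^ 4)⁻¹ = ((‖t‖ ^ 2)⁻¹) ^ 2 := by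
        rw [← inv_pow]; ring
      have hsub : ‖t - (a : ℂ)‖ ^ 2 = ‖t‖ ^ 2 - 2 * (t.re * a) + a ^ 2 := by
        rw [Complex.sq_norm, Complex.sq_norm,
          Complex.normSq_apply, Complex.normSq_apply]
        simp only [Complex.sub_re, Complex.sub_im, Complex.ofReal_re, Complex.ofReal_im,
          sub_zero]
        ring
      rw [hnorm, hS4, mul_pow, ← Real.exp_nat_mul, ← Real.exp_nat_mul, ← Real.exp_add,
        ← Real.exp_add]
      apply pointwise_aux (by positivity)
      rw [hsub, hr, ha, inv_pow]
      push_cast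
      nlinarith [hδ, hδ1]
    calc (∫⁻ t in {(0 : ℂ)}ᶜ,
            ENNReal.ofReal (‖(Real.exp r : ℂ) * Complex.exp (t * (δ : ℂ)⁻¹)‖ ^ 2 *
              Real.exp (-(‖t‖ ^ 2 + (‖t‖ ^ 2)⁻¹)) * (1 + (‖t‖ ^ 4)⁻¹)))
        ≤ ∫⁻ t in {(0 : ℂ)}ᶜ,
            ENNReal.ofReal (3 * Real.exp 1 * Real.exp (-‖t - (a : ℂ)‖ ^ 2)) :=
          setLIntegral_mono' (measurableSet_singleton _).compl hbound
      _ ≤ ∫⁻ t : ℂ, ENNReal.ofReal (3 * Real.exp 1 * Real.exp (-‖t - (a : ℂ)‖ ^ 2)) :=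
          setLIntegral_le_lintegral _ _
      _ = ENNReal.ofReal (3 * Real.exp 1) *
            ∫⁻ t : ℂ, ENNReal.ofReal (Real.exp (-‖t - (a : ℂ)‖ ^ 2)) := by
          rw [← lintegral_const_mul' _ _ ENNReal.ofReal_ne_top]
          congr 1 with t
          rw [← ENNReal.ofReal_mul (by positivity)]
      _ = ENNReal.ofReal (3 * Real.exp 1) * ENNReal.ofReal Real.pi := by
          rw [gauss_lintegral]
      _ ≤ ENNReal.ofReal (3 * Real.pi * Real.exp 1 / Real.sqrt δ) := by
          rw [← ENNReal.ofReal_mul (by positivity)]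
          apply ENNReal.ofReal_le_ofReal
          have hs0 : 0 < Real.sqrt δ := Real.sqrt_pos.mpr hδ
          have hs1 : Real.sqrt δ ≤ 1 := by
            rw [show (1:ℝ) = Real.sqrt 1 by simp]
            exact Real.sqrt_le_sqrt (by linarith)
          rw [le_div_iff₀ hs0]
          nlinarith [mul_le_mul_of_nonneg_left hs1
            (by positivity : (0:ℝ) ≤ 3 * Real.exp 1 * Real.pi)]
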